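/- The extended ratio function is 1-Lipschitz on ℝ: for all r, r' ∈ ℝ, |ξ(r) − ξ(r')| ≤ |r − r'|. -/
import Mathlib


theorem xi_lipschitz (ε α : ℝ) (hε : 0 < ε) (hα : 0 < α) (ξ : ℝ → ℝ)
    (h1 : ∀ r : ℝ, r < 1 - ε → ξ r = (1 - ε) - (1 - Real.exp (α * (ε + (r - 1)))) / α)
    (h2 : ∀ r : ℝ, 1 - ε ≤ r → r ≤ 1 + ε → ξ r = r)
    (h3 : ∀ r : ℝ, 1 + ε < r → ξ r = (1 + ε) + (1 - Real.exp (α * (ε - (r - 1)))) / α) :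
    ∀ r r' : ℝ, |ξ r - ξ r'| ≤ |r - r'| := by
  have hα' : α ≠ 0 := ne_of_gt hα
  have hexp : ∀ a b : ℝ, a ≤ b → b ≤ 0 → Real.exp b - Real.exp a ≤ b - a := by
    intro a b hab hb
    have e1 := Real.add_one_le_exp (a - b)
    have e2 : Real.exp a = Real.exp b * Real.exp (a - b) := by
      rw [← Real.exp_add]; ring_nf
    have e3 : Real.exp b ≤ 1 := Real.exp_le_one_iff.mpr hb
    have e4 := Real.exp_pos b
    nlinarith
  have key : ∀ r r' : ℝ, r ≤ r' → ξ r ≤ ξ r' ∧ ξ r' - ξ r ≤ r' - r := by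
    intro r r' hrr
    rcases lt_or_ge r (1 - ε) with hr | hr
    · -- r in lower region
      have hA : (1 - Real.exp (α * (ε + (r - 1)))) / α * α
          = 1 - Real.exp (α * (ε + (r - 1))) := div_mul_cancel₀ _ hα'
      have ha0 : α * (ε + (r - 1)) ≤ 0 := by nlinarith
      have hea1 : Real.exp (α * (ε + (r - 1))) ≤ 1 := Real.exp_le_one_iff.mpr ha0
      have hea2 := Real.add_one_le_exp (α * (ε + (r - 1)))
      have heap := Real.exp_pos (α * (ε + (r - 1)))
      rcases lt_or_ge r' (1 - ε) with hr' | hr'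
      · -- both lower
        rw [h1 r hr, h1 r' hr']
        have hB : (1 - Real.exp (α * (ε + (r' - 1)))) / α * α
            = 1 - Real.exp (α * (ε + (r' - 1))) := div_mul_cancel₀ _ hα'
        have hab : α * (ε + (r - 1)) ≤ α * (ε + (r' - 1)) := by nlinarith
        have hb0 : α * (ε + (r' - 1)) ≤ 0 := by nlinarith
        have e1 := hexp _ _ hab hb0
        have e2 : Real.exp (α * (ε + (r - 1))) ≤ Real.exp (α * (ε + (r' - 1))) :=
          Real.exp_le_exp.mpr hab
        constructor
        · nlinarith [hA, hB, e2]
        · nlinarith [hA, hB, e1]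
      · rcases le_or_gt r' (1 + ε) with hr'2 | hr'2
        · -- lower, middle
          rw [h1 r hr, h2 r' hr' hr'2]
          constructor
          · nlinarith [hA]
          · nlinarith [hA]
        · -- lower, upper
          rw [h1 r hr, h3 r' hr'2]
          have hC : (1 - Real.exp (α * (ε - (r' - 1)))) / α * α
              = 1 - Real.exp (α * (ε - (r' - 1))) := div_mul_cancel₀ _ hα'
          have hc0 : α * (ε - (r' - 1)) ≤ 0 := by nlinarith
          have hec1 : Real.exp (α * (ε - (r' - 1))) ≤ 1 := Real.exp_le_one_iff.mpr hc0
          have hec2 := Real.add_one_le_exp (α * (ε - (r' - 1)))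
          have hecp := Real.exp_pos (α * (ε - (r' - 1)))
          constructor
          · nlinarith [hA, hC]
          · nlinarith [hA, hC]
    · rcases le_or_gt r (1 + ε) with hr2 | hr2
      · rcases le_or_gt r' (1 + ε) with hr'2 | hr'2
        · -- both middle
          rw [h2 r hr hr2, h2 r' (le_trans hr hrr) hr'2]
          exact ⟨hrr, by linarith⟩
        · -- middle, upper
          rw [h2 r hr hr2, h3 r' hr'2]
          have hC : (1 - Real.exp (α * (ε - (r' - 1)))) / α * α
              = 1 - Real.exp (α * (ε - (r' - 1))) := div_mul_cancel₀ _ hα'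
          have hc0 : α * (ε - (r' - 1)) ≤ 0 := by nlinarith
          have hec1 : Real.exp (α * (ε - (r' - 1))) ≤ 1 := Real.exp_le_one_iff.mpr hc0
          have hec2 := Real.add_one_le_exp (α * (ε - (r' - 1)))
          have hecp := Real.exp_pos (α * (ε - (r' - 1)))
          constructor
          · nlinarith [hC]
          · nlinarith [hC]
      · -- both upper
        have hr'2 : 1 + ε < r' := lt_of_lt_of_le hr2 hrr
        rw [h3 r hr2, h3 r' hr'2]
        have hC : (1 - Real.exp (α * (ε - (r - 1)))) / α * α
            = 1 - Real.exp (α * (ε - (r - 1))) := div_mul_cancel₀ _ hα'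
        have hD : (1 - Real.exp (α * (ε - (r' - 1)))) / α * α
            = 1 - Real.exp (α * (ε - (r' - 1))) := div_mul_cancel₀ _ hα'
        have hab : α * (ε - (r' - 1)) ≤ α * (ε - (r - 1)) := by nlinarith
        have hb0 : α * (ε - (r - 1)) ≤ 0 := by nlinarith
        have e1 := hexp _ _ hab hb0
        have e2 : Real.exp (α * (ε - (r' - 1))) ≤ Real.exp (α * (ε - (r - 1))) :=
          Real.exp_le_exp.mpr hab
        constructor
        · nlinarith [hC, hD, e2]
        · nlinarith [hC, hD, e1]
  intro r r'
  rcases le_total r r' with h | h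
  · obtain ⟨k1, k2⟩ := key r r' h
    rw [abs_of_nonpos (by linarith), abs_of_nonpos (by linarith)]
    linarith
  · obtain ⟨k1, k2⟩ := key r' r h
    rw [abs_of_nonneg (by linarith), abs_of_nonneg (by linarith)]
    linarith
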